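/- Let F = { y ∈ R^m : X(y) ⪰ 0 } with X(y) = X + Σ_k y_k M^k affine into symmetric matrices, let x ∈ F, and let U be a matrix whose columns form an orthonormal basis of the null space of X(x). Then the affine hull of face(x), the minimal face of F containing x, equals { y ∈ R^m : X(y) U = 0 }. -/

import Mathlib

open Matrix BigOperators

/-- `A` is a (nonempty, convex) face of the convex set `F`. -/
def IsFaceOf {E : Type*} [AddCommGroup E] [Module ℝ E] (F A : Set E) : Prop :=
  Convex ℝ A ∧ IsExtreme ℝ F A

/-- `A` is the minimal face of `F` containing the set `S`. -/
def IsMinFaceOf {E : Type*} [AddCommGroup E] [Module ℝ E] (F S A : Set E) : Prop :=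
  IsFaceOf F A ∧ S ⊆ A ∧ ∀ B, IsFaceOf F B → S ⊆ B → A ⊆ B


/-- quadratic form bound by sum of absolute entries -/
lemma quad_bound {N : ℕ} (A : Matrix (Fin N) (Fin N) ℝ) (v : Fin N → ℝ) :
    |v ⬝ᵥ (A *ᵥ v)| ≤ (∑ i, ∑ j, |A i j|) * (v ⬝ᵥ v) := by
  have hvv : ∀ i j : Fin N, |v i| * |v j| ≤ v ⬝ᵥ v := by
    intro i j
    have h1 : v i ^ 2 ≤ v ⬝ᵥ v := by
      have := Finset.single_le_sum (f := fun l => v l * v l)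
        (fun l _ => mul_self_nonneg _) (Finset.mem_univ i)
      simpa [dotProduct, sq] using this
    have h2 : v j ^ 2 ≤ v ⬝ᵥ v := by
      have := Finset.single_le_sum (f := fun l => v l * v l)
        (fun l _ => mul_self_nonneg _) (Finset.mem_univ j)
      simpa [dotProduct, sq] using this
    nlinarith [abs_nonneg (v i), abs_nonneg (v j), sq_abs (v i), sq_abs (v j)]
  calc |v ⬝ᵥ (A *ᵥ v)| = |∑ i, ∑ j, v i * A i j * v j| := by
        simp [dotProduct, mulVec, Finset.mul_sum, mul_assoc]
    _ ≤ ∑ i, ∑ j, |v i * A i j * v j| := by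
        refine (Finset.abs_sum_le_sum_abs _ _).trans ?_
        exact Finset.sum_le_sum fun i _ => Finset.abs_sum_le_sum_abs _ _
    _ ≤ ∑ i, ∑ j, |A i j| * (v ⬝ᵥ v) := by
        refine Finset.sum_le_sum fun i _ => Finset.sum_le_sum fun j _ => ?_
        rw [abs_mul, abs_mul]
        calc |v i| * |A i j| * |v j| = |A i j| * (|v i| * |v j|) := by ring
          _ ≤ |A i j| * (v ⬝ᵥ v) := by
              exact mul_le_mul_of_nonneg_left (hvv i j) (abs_nonneg _)
    _ = (∑ i, ∑ j, |A i j|) * (v ⬝ᵥ v) := by simp [Finset.sum_mul]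
      
lemma dp_BtB {N : ℕ} (B : Matrix (Fin N) (Fin N) ℝ) (v w : Fin N → ℝ) :
    (B *ᵥ v) ⬝ᵥ (B *ᵥ w) = v ⬝ᵥ ((Bᵀ * B) *ᵥ w) := by
  conv_rhs => rw [Matrix.dotProduct_mulVec, ← Matrix.vecMul_vecMul,
    Matrix.vecMul_transpose, ← Matrix.dotProduct_mulVec]

open scoped MatrixOrder in
lemma posdef_lower {N : ℕ} {G : Matrix (Fin N) (Fin N) ℝ} (hG : G.PosDef) :
    ∃ c : ℝ, 0 < c ∧ ∀ v : Fin N → ℝ, c * (v ⬝ᵥ v) ≤ v ⬝ᵥ (G *ᵥ v) := by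
  have hGinv : G⁻¹.PosDef := hG.inv
  obtain ⟨B, hB⟩ :=
    CStarAlgebra.nonneg_iff_eq_star_mul_self.mp hGinv.posSemidef.nonneg
  have hB' : G⁻¹ = Bᵀ * B := by simpa [Matrix.star_eq_conjTranspose] using hB
  set C := (∑ i, ∑ j, |G⁻¹ i j|) + 1 with hC
  have hS : (0:ℝ) ≤ ∑ i, ∑ j, |G⁻¹ i j| :=
    Finset.sum_nonneg fun i _ => Finset.sum_nonneg fun j _ => abs_nonneg _
  have hCpos : 0 < C := by rw [hC]; linarith
  refine ⟨C⁻¹, inv_pos.mpr hCpos, fun v => ?_⟩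
  have hGG : G⁻¹ * G = 1 :=
    Matrix.nonsing_inv_mul G (isUnit_iff_ne_zero.mpr (ne_of_gt hG.det_pos))
  have key : v ⬝ᵥ v = (B *ᵥ v) ⬝ᵥ (B *ᵥ (G *ᵥ v)) := by
    rw [dp_BtB, ← hB', Matrix.mulVec_mulVec, hGG, Matrix.one_mulVec]
  have cs : (v ⬝ᵥ v)^2 ≤ ((B *ᵥ v) ⬝ᵥ (B *ᵥ v)) * ((B *ᵥ (G *ᵥ v)) ⬝ᵥ (B *ᵥ (G *ᵥ v))) := by
    rw [key]
    simpa [dotProduct, sq] using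
      Finset.sum_mul_sq_le_sq_mul_sq Finset.univ (fun i => (B *ᵥ v) i) (fun i => (B *ᵥ (G *ᵥ v)) i)
  have e1 : (B *ᵥ v) ⬝ᵥ (B *ᵥ v) = v ⬝ᵥ (G⁻¹ *ᵥ v) := by rw [dp_BtB, ← hB']
  have e2 : (B *ᵥ (G *ᵥ v)) ⬝ᵥ (B *ᵥ (G *ᵥ v)) = v ⬝ᵥ (G *ᵥ v) := by
    rw [dp_BtB, ← hB', Matrix.mulVec_mulVec, hGG, Matrix.one_mulVec, dotProduct_comm]
  have hq' : v ⬝ᵥ (G⁻¹ *ᵥ v) ≤ (C - 1) * (v ⬝ᵥ v) := by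
    rw [hC]
    have := (le_abs_self (v ⬝ᵥ (G⁻¹ *ᵥ v))).trans (quad_bound G⁻¹ v)
    linarith
  have hvv : 0 ≤ v ⬝ᵥ v := by
    simpa [dotProduct] using Finset.sum_nonneg fun i (_ : i ∈ Finset.univ) => mul_self_nonneg (v i)
  have hGv : 0 ≤ v ⬝ᵥ (G *ᵥ v) := by simpa using hG.posSemidef.dotProduct_mulVec_nonneg v
  rcases eq_or_lt_of_le hvv with h0 | h0
  · rw [← h0, mul_zero]; exact hGv
  · rw [inv_mul_le_iff₀ hCpos]
    have cs' : (v ⬝ᵥ v)^2 ≤ (v ⬝ᵥ (G⁻¹ *ᵥ v)) * (v ⬝ᵥ (G *ᵥ v)) := by rw [← e1, ← e2]; exact cs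
    have h1 := cs'.trans (mul_le_mul_of_nonneg_right hq' hGv)
    nlinarith [h1, mul_nonneg hvv hGv, h0]
lemma psd_smul {N : ℕ} {P : Matrix (Fin N) (Fin N) ℝ} (hP : P.PosSemidef) {a : ℝ}
    (ha : 0 ≤ a) : (a • P).PosSemidef := by
  exact hP.smul ha

lemma herm_of_symm {N : ℕ} {A : Matrix (Fin N) (Fin N) ℝ} (h : A.IsSymm) : A.IsHermitian := by
  rwa [Matrix.IsHermitian, Matrix.conjTranspose_eq_transpose_of_trivial]

lemma Ysymm {m N : ℕ} (X : Matrix (Fin N) (Fin N) ℝ) (hX : X.IsSymm)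
    (M : Fin m → Matrix (Fin N) (Fin N) ℝ) (hM : ∀ i, (M i).IsSymm) (y : Fin m → ℝ) :
    (X + ∑ i, y i • M i).IsSymm := by
  rw [Matrix.IsSymm, Matrix.transpose_add, Matrix.transpose_sum, hX]
  congr 1
  exact Finset.sum_congr rfl fun i _ => by rw [Matrix.transpose_smul, hM i]

lemma mul_eq_zero_iff_cols {N k : ℕ} (A : Matrix (Fin N) (Fin N) ℝ)
    (U : Matrix (Fin N) (Fin k) ℝ) :
    A * U = 0 ↔ ∀ c, A *ᵥ (fun i => U i c) = 0 := by
  constructor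
  · intro h c
    funext i
    have := congrFun (congrFun h i) c
    simpa [Matrix.mul_apply, Matrix.mulVec, dotProduct] using this
  · intro h
    ext i c
    have := congrFun (h c) i
    simpa [Matrix.mul_apply, Matrix.mulVec, dotProduct] using this

lemma colcomb {N k : ℕ} (U : Matrix (Fin N) (Fin k) ℝ) (v : Fin N → ℝ) :
    v ∈ Submodule.span ℝ (Set.range fun c => fun i => U i c) ↔ ∃ a, v = U *ᵥ a := by
  rw [Submodule.mem_span_range_iff_exists_fun]
  constructor
  · rintro ⟨a, ha⟩
    refine ⟨a, ?_⟩
    rw [← ha]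
    funext i
    simp [Matrix.mulVec, dotProduct, Finset.sum_apply, mul_comm]
  · rintro ⟨a, rfl⟩
    refine ⟨a, ?_⟩
    funext i
    simp [Matrix.mulVec, dotProduct, Finset.sum_apply, mul_comm]

lemma Ycomb {m N : ℕ} (X : Matrix (Fin N) (Fin N) ℝ) (M : Fin m → Matrix (Fin N) (Fin N) ℝ)
    {a b : ℝ} (h : a + b = 1) (u v : Fin m → ℝ) :
    X + ∑ i, (a • u + b • v) i • M i
      = a • (X + ∑ i, u i • M i) + b • (X + ∑ i, v i • M i) := by
  have e : ∀ i : Fin m, ((a • u + b • v) i) • M i = a • (u i • M i) + b • (v i • M i) := by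
    intro i
    simp [add_smul, mul_smul]
  rw [Finset.sum_congr rfl (fun i _ => e i), Finset.sum_add_distrib, ← Finset.smul_sum,
    ← Finset.smul_sum, smul_add, smul_add]
  have hX : X = a • X + b • X := by rw [← add_smul, h, one_smul]
  conv_lhs => rw [hX]
  abel

lemma Ycomb3 {m N : ℕ} (X : Matrix (Fin N) (Fin N) ℝ) (M : Fin m → Matrix (Fin N) (Fin N) ℝ)
    (c : ℝ) (p₁ p₂ p₃ : Fin m → ℝ) :
    X + ∑ i, (c • (p₁ - p₂) + p₃) i • M i
      = c • (X + ∑ i, p₁ i • M i) - c • (X + ∑ i, p₂ i • M i) + (X + ∑ i, p₃ i • M i) := by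
  have e : ∀ i : Fin m, ((c • (p₁ - p₂) + p₃) i) • M i
      = (c • (p₁ i • M i) - c • (p₂ i • M i)) + p₃ i • M i := by
    intro i
    simp [add_smul, sub_smul, mul_smul, mul_sub, smul_sub]
  rw [Finset.sum_congr rfl (fun i _ => e i), Finset.sum_add_distrib, Finset.sum_sub_distrib,
    ← Finset.smul_sum, ← Finset.smul_sum, smul_add, smul_add]
  abel
lemma claimQ {m N k : ℕ} (X : Matrix (Fin N) (Fin N) ℝ) (hX : X.IsSymm)
    (M : Fin m → Matrix (Fin N) (Fin N) ℝ) (hM : ∀ i, (M i).IsSymm)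
    (x : Fin m → ℝ) (hx : (X + ∑ i, x i • M i).PosSemidef)
    (U : Matrix (Fin N) (Fin k) ℝ) (hUU : Uᵀ * U = 1)
    (hUnull : ∀ v : Fin N → ℝ,
      (X + ∑ i, x i • M i) *ᵥ v = 0 ↔
        v ∈ Submodule.span ℝ (Set.range fun c => fun i => U i c))
    (y : Fin m → ℝ) (hy : (X + ∑ i, y i • M i) * U = 0) :
    ∃ t : ℝ, 0 < t ∧ t < 1 ∧
      (X + ∑ i, ((1-t) • x + t • y) i • M i).PosSemidef := by
  set Yx := X + ∑ i, x i • M i with hYx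
  set Yy := X + ∑ i, y i • M i with hYy
  -- X(x) U = 0
  have hYxU : Yx * U = 0 := by
    rw [mul_eq_zero_iff_cols]
    intro c
    exact (hUnull _).mpr (Submodule.subset_span (Set.mem_range_self c))
  -- G := Yx + U Uᵀ is positive definite
  have hUUt : (U * Uᵀ).PosSemidef := by
    have := Matrix.posSemidef_self_mul_conjTranspose U
    rwa [Matrix.conjTranspose_eq_transpose_of_trivial] at this
  set G := Yx + U * Uᵀ with hG
  have hGpsd : G.PosSemidef := hx.add hUUt
  have hUtv : ∀ v : Fin N → ℝ, v ⬝ᵥ ((U * Uᵀ) *ᵥ v) = (Uᵀ *ᵥ v) ⬝ᵥ (Uᵀ *ᵥ v) := by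
    intro v
    rw [← Matrix.mulVec_mulVec, Matrix.dotProduct_mulVec, ← Matrix.mulVec_transpose]
  have hGpd : G.PosDef := by
    refine Matrix.PosDef.of_dotProduct_mulVec_pos hGpsd.1 fun v hv => ?_
    rcases lt_or_eq_of_le (by simpa using hGpsd.dotProduct_mulVec_nonneg v) with h | h
    · simpa using h
    · exfalso
      have hYxv : 0 ≤ v ⬝ᵥ (Yx *ᵥ v) := by simpa using hx.dotProduct_mulVec_nonneg v
      have hUv : 0 ≤ v ⬝ᵥ ((U * Uᵀ) *ᵥ v) := by simpa using hUUt.dotProduct_mulVec_nonneg v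
      have hsplit : v ⬝ᵥ (G *ᵥ v) = v ⬝ᵥ (Yx *ᵥ v) + v ⬝ᵥ ((U * Uᵀ) *ᵥ v) := by
        rw [hG, Matrix.add_mulVec, dotProduct_add]
      have hUv' := hUtv v
      have h1 : v ⬝ᵥ (Yx *ᵥ v) = 0 := by linarith
      have h2 : (Uᵀ *ᵥ v) ⬝ᵥ (Uᵀ *ᵥ v) = 0 := by rw [← hUv']; linarith
      have hvnull : Yx *ᵥ v = 0 := by
        have := (hx.dotProduct_mulVec_zero_iff v).mp (by simpa using h1)
        exact this
      obtain ⟨a, rfl⟩ := (colcomb U v).mp ((hUnull v).mp hvnull)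
      have ha : Uᵀ *ᵥ (U *ᵥ a) = a := by
        rw [Matrix.mulVec_mulVec, hUU, Matrix.one_mulVec]
      rw [ha, dotProduct_self_eq_zero] at h2
      rw [h2, Matrix.mulVec_zero] at hv
      exact hv rfl
  obtain ⟨lam, hlam, hlow⟩ := posdef_lower hGpd
  set C := ∑ i, ∑ j, |Yy i j| with hCdef
  have hC0 : 0 ≤ C :=
    Finset.sum_nonneg fun i _ => Finset.sum_nonneg fun j _ => abs_nonneg _
  set t := lam / (lam + C + 1) with htdef
  have hden : 0 < lam + C + 1 := by linarith
  have ht0 : 0 < t := div_pos hlam hden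
  have ht1 : t < 1 := by
    rw [htdef, div_lt_one hden]
    linarith
  have ht : t * (lam + C + 1) = lam := by
    rw [htdef]
    field_simp
  refine ⟨t, ht0, ht1, ?_⟩
  have hZ : X + ∑ i, ((1-t) • x + t • y) i • M i = (1-t) • Yx + t • Yy :=
    Ycomb X M (by ring) x y
  rw [hZ]
  refine Matrix.PosSemidef.of_dotProduct_mulVec_nonneg ?_ ?_
  · -- Hermitian
    refine herm_of_symm ?_
    have hx' : Yx.IsSymm := Ysymm X hX M hM x
    have hy' : Yy.IsSymm := Ysymm X hX M hM y
    rw [Matrix.IsSymm, Matrix.transpose_add, Matrix.transpose_smul, Matrix.transpose_smul,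
      hx', hy']
  · intro v
    simp only [star_trivial]
    set p := U *ᵥ (Uᵀ *ᵥ v) with hp
    set w := v - p with hw
    set Z := (1-t) • Yx + t • Yy with hZdef
    have hZU : Z * U = 0 := by
      rw [hZdef, Matrix.add_mul, Matrix.smul_mul, Matrix.smul_mul, hYxU, hy]
      simp
    have hZp : Z *ᵥ p = 0 := by
      rw [hp, Matrix.mulVec_mulVec, hZU, Matrix.zero_mulVec]
    have hwU : Uᵀ *ᵥ w = 0 := by
      rw [hw, Matrix.mulVec_sub, hp, Matrix.mulVec_mulVec, Matrix.mulVec_mulVec, hUU,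
        Matrix.one_mul, sub_self]
    have hZsymm : Zᵀ = Z := by
      have hx' : Yx.IsSymm := Ysymm X hX M hM x
      have hy' : Yy.IsSymm := Ysymm X hX M hM y
      rw [hZdef, Matrix.transpose_add, Matrix.transpose_smul, Matrix.transpose_smul, hx', hy']
    have hvw : v = w + p := by rw [hw, sub_add_cancel]
    have hpzw : p ⬝ᵥ (Z *ᵥ w) = 0 := by
      rw [Matrix.dotProduct_mulVec, ← Matrix.mulVec_transpose, hZsymm, hZp, zero_dotProduct]
    have hkey : v ⬝ᵥ (Z *ᵥ v) = w ⬝ᵥ (Z *ᵥ w) := by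
      conv_lhs => rw [hvw]
      rw [Matrix.mulVec_add, hZp, add_zero, add_dotProduct, hpzw, add_zero]
    have hYxw : lam * (w ⬝ᵥ w) ≤ w ⬝ᵥ (Yx *ᵥ w) := by
      have hlw := hlow w
      have hsplit : w ⬝ᵥ (G *ᵥ w) = w ⬝ᵥ (Yx *ᵥ w) + (Uᵀ *ᵥ w) ⬝ᵥ (Uᵀ *ᵥ w) := by
        rw [hG, Matrix.add_mulVec, dotProduct_add, hUtv]
      rw [hsplit, hwU] at hlw
      simpa using hlw
    have hYyw : |w ⬝ᵥ (Yy *ᵥ w)| ≤ C * (w ⬝ᵥ w) := quad_bound Yy w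
    have hws : 0 ≤ w ⬝ᵥ w := by
      simpa [dotProduct] using
        Finset.sum_nonneg fun i (_ : i ∈ Finset.univ) => mul_self_nonneg (w i)
    have hexpand : w ⬝ᵥ (Z *ᵥ w) = (1-t) * (w ⬝ᵥ (Yx *ᵥ w)) + t * (w ⬝ᵥ (Yy *ᵥ w)) := by
      rw [hZdef, Matrix.add_mulVec, dotProduct_add, Matrix.smul_mulVec,
        Matrix.smul_mulVec, dotProduct_smul, dotProduct_smul]
      simp [smul_eq_mul]
    rw [hkey, hexpand]
    have h1 : (1-t) * (lam * (w ⬝ᵥ w)) ≤ (1-t) * (w ⬝ᵥ (Yx *ᵥ w)) :=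
      mul_le_mul_of_nonneg_left hYxw (by linarith)
    have h2 : t * (-(C * (w ⬝ᵥ w))) ≤ t * (w ⬝ᵥ (Yy *ᵥ w)) :=
      mul_le_mul_of_nonneg_left (neg_le_of_abs_le hYyw) ht0.le
    have ht2 : (t * (lam + C + 1)) * (w ⬝ᵥ w) = lam * (w ⬝ᵥ w) := by rw [ht]
    nlinarith [h1, h2, ht2, mul_nonneg ht0.le hws]

/-- Let `x` be a point of the spectrahedron `F = {y : X(y) ⪰ 0}` and let the columns
of `U` be an orthonormal basis of the null space of `X(x)`.  Then the affine hull of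
the minimal face of `F` containing `x` is `{y : X(y) U = 0}`. -/
theorem stmt11 (m N k : ℕ) (X : Matrix (Fin N) (Fin N) ℝ) (hX : X.IsSymm)
    (M : Fin m → Matrix (Fin N) (Fin N) ℝ) (hM : ∀ i, (M i).IsSymm)
    (F : Set (Fin m → ℝ))
    (hF : F = {y : Fin m → ℝ | (X + ∑ i, y i • M i).PosSemidef})
    (x : Fin m → ℝ) (hx : x ∈ F)
    (U : Matrix (Fin N) (Fin k) ℝ) (hUU : Uᵀ * U = 1)
    (hUnull : ∀ v : Fin N → ℝ,
      (X + ∑ i, x i • M i) *ᵥ v = 0 ↔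
        v ∈ Submodule.span ℝ (Set.range fun c => fun i => U i c)) :
    ∀ A : Set (Fin m → ℝ), IsMinFaceOf F {x} A →
      (affineSpan ℝ A : Set (Fin m → ℝ)) =
        {y : Fin m → ℝ | (X + ∑ i, y i • M i) * U = 0} := by
  intro A hA
  set L : Set (Fin m → ℝ) := {y : Fin m → ℝ | (X + ∑ i, y i • M i) * U = 0} with hL
  have hxFm : (X + ∑ i, x i • M i).PosSemidef := by rw [hF] at hx; exact hx
  have hxL : x ∈ L := by
    show (X + ∑ i, x i • M i) * U = 0
    rw [mul_eq_zero_iff_cols]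
    intro c
    exact (hUnull _).mpr (Submodule.subset_span (Set.mem_range_self c))
  -- membership in F unfolded
  have hmemF : ∀ y, y ∈ F ↔ (X + ∑ i, y i • M i).PosSemidef := by
    intro y; rw [hF]; rfl
  have hmemL : ∀ y, y ∈ L ↔ (X + ∑ i, y i • M i) * U = 0 := fun y => Iff.rfl
  -- F ∩ L is a face of F
  have hA0face : IsFaceOf F (F ∩ L) := by
    constructor
    · -- convex
      intro u hu v hv a b ha hb hab
      have hu' := (hmemF u).mp hu.1
      have hv' := (hmemF v).mp hv.1
      constructor
      · rw [hmemF, Ycomb X M hab u v]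
        exact (psd_smul hu' ha).add (psd_smul hv' hb)
      · rw [hmemL, Ycomb X M hab u v, Matrix.add_mul, Matrix.smul_mul, Matrix.smul_mul,
          hu.2, hv.2]
        simp
    · constructor
      · exact Set.inter_subset_left
      · intro x₁ hx₁ x₂ hx₂ z hz hseg
        obtain ⟨a, b, ha, hb, hab, hcomb⟩ := hseg
        have h1 := (hmemF x₁).mp hx₁
        have h2 := (hmemF x₂).mp hx₂
        have hzY : X + ∑ i, z i • M i
            = a • (X + ∑ i, x₁ i • M i) + b • (X + ∑ i, x₂ i • M i) := by
          rw [← hcomb]; exact Ycomb X M hab x₁ x₂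
        have key : ∀ (P : Matrix (Fin N) (Fin N) ℝ), P.PosSemidef →
            (∀ Q, Q.PosSemidef → ∀ (cP cQ : ℝ), 0 < cP → 0 < cQ →
              cP • P + cQ • Q = (X + ∑ i, z i • M i) → P * U = 0) := by
          intro P hP Q hQ cP cQ hcP hcQ hPQ
          rw [mul_eq_zero_iff_cols]
          intro c
          set u : Fin N → ℝ := fun i => U i c with hu
          have hzu : (X + ∑ i, z i • M i) *ᵥ u = 0 :=
            (mul_eq_zero_iff_cols _ _).mp hz.2 c
          have hzq : u ⬝ᵥ ((X + ∑ i, z i • M i) *ᵥ u) = 0 := by rw [hzu]; simp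
          have hsplit : u ⬝ᵥ ((X + ∑ i, z i • M i) *ᵥ u)
              = cP * (u ⬝ᵥ (P *ᵥ u)) + cQ * (u ⬝ᵥ (Q *ᵥ u)) := by
            rw [← hPQ, Matrix.add_mulVec, dotProduct_add, Matrix.smul_mulVec,
              Matrix.smul_mulVec, dotProduct_smul, dotProduct_smul]
            simp [smul_eq_mul]
          have hPq : 0 ≤ u ⬝ᵥ (P *ᵥ u) := by simpa using hP.dotProduct_mulVec_nonneg u
          have hQq : 0 ≤ u ⬝ᵥ (Q *ᵥ u) := by simpa using hQ.dotProduct_mulVec_nonneg u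
          have hP0 : u ⬝ᵥ (P *ᵥ u) = 0 := by nlinarith
          exact (hP.dotProduct_mulVec_zero_iff u).mp (by simpa using hP0)
        exact ⟨hx₁, key _ h1 _ h2 a b ha hb hzY.symm⟩
  -- F ∩ L is contained in every face containing x
  have hA0min : ∀ B, IsFaceOf F B → x ∈ B → (F ∩ L) ⊆ B := by
    intro B hB hxB y hy
    have hy2 : (X + ∑ i, ((2:ℝ) • x + (-1:ℝ) • y) i • M i) * U = 0 := by
      rw [Ycomb X M (by ring : (2:ℝ) + (-1) = 1) x y, Matrix.add_mul, Matrix.smul_mul,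
        Matrix.smul_mul, hxL, hy.2]
      simp
    obtain ⟨t, ht0, ht1, hzpsd⟩ := claimQ X hX M hM x hxFm U hUU hUnull _ hy2
    set z := (1-t) • x + t • ((2:ℝ) • x + (-1:ℝ) • y) with hzdef
    have hzF : z ∈ F := (hmemF z).mpr hzpsd
    have hseg : x ∈ openSegment ℝ z y := by
      refine ⟨1/(1+t), t/(1+t), by positivity, by positivity, by field_simp, ?_⟩
      funext i
      simp only [hzdef, Pi.smul_apply, Pi.add_apply, smul_eq_mul, Pi.neg_apply]
      field_simp
      ring
    exact hB.2.right_mem_of_mem_openSegment hzF hy.1 hxB hseg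
  have hxA0 : x ∈ F ∩ L := ⟨hx, hxL⟩
  have hxA : x ∈ A := hA.2.1 rfl
  have hAeq : A = F ∩ L :=
    Set.Subset.antisymm (hA.2.2 _ hA0face (by simpa using hxA0)) (hA0min A hA.1 hxA)
  -- the affine subspace with carrier L
  let LS : AffineSubspace ℝ (Fin m → ℝ) :=
    { carrier := L
      smul_vsub_vadd_mem' := by
        intro c p₁ p₂ p₃ h1 h2 h3
        show (X + ∑ i, (c • (p₁ -ᵥ p₂) +ᵥ p₃) i • M i) * U = 0
        have hvv : c • (p₁ -ᵥ p₂) +ᵥ p₃ = c • (p₁ - p₂) + p₃ := rfl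
        rw [hvv, Ycomb3 X M c p₁ p₂ p₃, Matrix.add_mul, Matrix.sub_mul, Matrix.smul_mul,
          Matrix.smul_mul, h1, h2, h3]
        simp }
  ext y
  constructor
  · intro hy
    have hle : affineSpan ℝ A ≤ LS :=
      affineSpan_le.mpr (by rw [hAeq]; exact fun w hw => hw.2)
    exact hle hy
  · intro hy
    obtain ⟨t, ht0, ht1, hzpsd⟩ := claimQ X hX M hM x hxFm U hUU hUnull y hy
    set z := (1-t) • x + t • y with hzdef
    have hzL : z ∈ L := by
      rw [hmemL, show z = (1-t) • x + t • y from rfl,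
        Ycomb X M (by ring : (1-t) + t = 1) x y, Matrix.add_mul, Matrix.smul_mul,
        Matrix.smul_mul, hxL, hy]
      simp
    have hzA : z ∈ A := by
      rw [hAeq]
      exact ⟨(hmemF z).mpr hzpsd, hzL⟩
    have hxmem : x ∈ affineSpan ℝ A := subset_affineSpan ℝ A hxA
    have hzmem : z ∈ affineSpan ℝ A := subset_affineSpan ℝ A hzA
    have hmem := AffineSubspace.smul_vsub_vadd_mem (affineSpan ℝ A) (1/t) hzmem hxmem hxmem
    have hyeq : (1/t) • (z -ᵥ x) +ᵥ x = y := by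
      funext i
      simp only [hzdef, vsub_eq_sub, vadd_eq_add, Pi.add_apply, Pi.smul_apply, Pi.sub_apply,
        smul_eq_mul]
      field_simp
      ring
    rw [← hyeq]
    exact hmem
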